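/- arXiv:1602.04482 — 2 statements merged into one kernel-verified Lean document; each statement's English description precedes it below -/
import Mathlib

section
/- Let (E, F_1,…,F_m, k, ρ_1,…,ρ_m) be a Construction-1 configuration, and write η_i = |F_i| − ρ_i and F_I = ⋃_{i∈I} F_i. Then there exists a matroid M on ground set E such that: (i) for every I ⊆ {1,…,m}, r_M(F_I) = min{|F_I| − Σ_{i∈I} η_i, k}; (ii) r_M(E) = k; and (iii) the cyclic flats of M (sets that are simultaneously flats of M and unions of circuits of M) are exactly the sets in {F_I : I ⊆ {1,…,m}, |F_I| − Σ_{i∈I} η_i < k} ∪ {E}. -/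
open scoped BigOperators

attribute [local instance] Classical.propDecidable

/-- A matroid on a finite ground set `E`, given by its rank function on `Finset`s,
satisfying the rank axioms: boundedness by cardinality, monotonicity and
submodularity (for subsets of the ground set). -/
structure FinMatroid (α : Type) where
  /-- the ground set -/
  E : Finset α
  /-- the rank function -/
  rk : Finset α → ℕ
  rk_le_card : ∀ X, X ⊆ E → rk X ≤ X.card
  rk_mono : ∀ X Y, X ⊆ Y → Y ⊆ E → rk X ≤ rk Y
  rk_submodular : ∀ X Y, X ⊆ E → Y ⊆ E → rk (X ∪ Y) + rk (X ∩ Y) ≤ rk X + rk Y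

namespace FinMatroid

variable {α : Type} [DecidableEq α] (M : FinMatroid α)

/-- A circuit: a minimal dependent subset of the ground set. -/
def IsCircuit (C : Finset α) : Prop :=
  C ⊆ M.E ∧ M.rk C < C.card ∧ ∀ X, X ⊂ C → M.rk X = X.card

/-- A cyclic set: a union of circuits, i.e. every element lies in a circuit
contained in the set. -/
def IsCyclic (X : Finset α) : Prop :=
  X ⊆ M.E ∧ ∀ x ∈ X, ∃ C, C ⊆ X ∧ M.IsCircuit C ∧ x ∈ C

/-- The closure of a set: all ground set elements whose insertion does not
increase the rank. -/
def closure (X : Finset α) : Finset α :=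
  M.E.filter (fun y => M.rk (insert y X) = M.rk X)

/-- A flat: a subset of the ground set equal to its closure. -/
def IsFlat (X : Finset α) : Prop :=
  X ⊆ M.E ∧ M.closure X = X

/-- A cyclic flat: a flat that is also a union of circuits. -/
def IsCyclicFlat (X : Finset α) : Prop :=
  M.IsFlat X ∧ M.IsCyclic X

end FinMatroid

open scoped BigOperators

/-- A Construction-1 configuration: a finite set `E ⊆ ℕ` covered by nonempty subsets
`F 0, …, F (m-1)`, a positive integer `k`, and ranks `ρ i` with `0 < ρ i < |F i|`,
such that `k ≤ |E| - ∑ η i` (where `η i = |F i| - ρ i`) and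
`|F_{[m] \ {j}} ∩ F j| < ρ j` for all `j`. -/
structure Constr1Config where
  /-- the number of subsets -/
  m : ℕ
  hm : 0 < m
  /-- the subsets `F i` -/
  F : Fin m → Finset ℕ
  /-- the dimension -/
  k : ℕ
  hk : 0 < k
  /-- the ranks of the subsets -/
  ρ : Fin m → ℕ
  hρpos : ∀ i, 0 < ρ i
  hρlt : ∀ i, ρ i < (F i).card
  hdim : (k : ℤ) ≤ ((Finset.univ.biUnion F).card : ℤ) - ∑ i, (((F i).card : ℤ) - (ρ i : ℤ))
  hint : ∀ j, (((Finset.univ.erase j).biUnion F) ∩ F j).card < ρ j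

namespace Constr1Config

variable (c : Constr1Config)

/-- The ground set `E = F_[m]`. -/
def E : Finset ℕ := Finset.univ.biUnion c.F

/-- The parameter `n = |E|`. -/
def n : ℕ := c.E.card

/-- The nullity `η i = |F i| - ρ i`. -/
def η (i : Fin c.m) : ℕ := (c.F i).card - c.ρ i

/-- The parameter `r = max_i ρ i`. -/
def r : ℕ := Finset.univ.sup c.ρ

/-- The parameter `δ = 1 + min_i η i`. -/
def δ : ℕ :=
  1 + Finset.univ.inf' ⟨⟨0, c.hm⟩, Finset.mem_univ _⟩ c.η

/-- The minimum-distance parameter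
`d = n - k + 1 - max{∑_{i ∈ I} η i : |F_I| - ∑_{i ∈ I} η i < k}`. -/
def d : ℤ :=
  (c.n : ℤ) - (c.k : ℤ) + 1 -
    (((Finset.univ.powerset.filter
        (fun I : Finset (Fin c.m) =>
          ((I.biUnion c.F).card : ℤ) - ∑ i ∈ I, (c.η i : ℤ) < (c.k : ℤ))).sup
        (fun I => ∑ i ∈ I, c.η i) : ℕ) : ℤ)

end Constr1Config

open scoped BigOperators
open Finset

namespace C1

variable (c : Constr1Config)

/-- `u I = |F_I| - ∑_{i∈I} η_i` as an integer. -/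
def u (I : Finset (Fin c.m)) : ℤ :=
  ((I.biUnion c.F).card : ℤ) - ∑ i ∈ I, (c.η i : ℤ)

/-- `gv X I = |X ∪ F_I| - ∑_{i∈I} η_i`. -/
def gv (X : Finset ℕ) (I : Finset (Fin c.m)) : ℤ :=
  (((X ∪ I.biUnion c.F)).card : ℤ) - ∑ i ∈ I, (c.η i : ℤ)

lemma univ_ne : (Finset.univ : Finset (Finset (Fin c.m))).Nonempty := ⟨∅, mem_univ _⟩

/-- the rank function, as an integer. -/
def fv (X : Finset ℕ) : ℤ :=
  min (c.k : ℤ) ((Finset.univ : Finset (Finset (Fin c.m))).inf' (univ_ne c) (gv c X))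

lemma eta_cast (i : Fin c.m) : (c.η i : ℤ) = ((c.F i).card : ℤ) - (c.ρ i : ℤ) := by
  have := c.hρlt i
  unfold Constr1Config.η
  omega

lemma eta_pos (i : Fin c.m) : 1 ≤ (c.η i : ℤ) := by
  have := c.hρlt i; have := c.hρpos i
  unfold Constr1Config.η
  omega

lemma sum_eta_nonneg (I : Finset (Fin c.m)) : 0 ≤ ∑ i ∈ I, (c.η i : ℤ) :=
  Finset.sum_nonneg fun i _ => Int.natCast_nonneg _

lemma biUnion_union_idx (I J : Finset (Fin c.m)) :
    (I ∪ J).biUnion c.F = I.biUnion c.F ∪ J.biUnion c.F := by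
  ext x; simp [Finset.mem_biUnion, Finset.mem_union, or_and_right, exists_or]

lemma u_insert {J : Finset (Fin c.m)} {j : Fin c.m} (hj : j ∉ J) :
    u c J + 1 ≤ u c (insert j J) := by
  have hsub : J.biUnion c.F ⊆ (Finset.univ.erase j).biUnion c.F := by
    apply Finset.biUnion_subset_biUnion_of_subset_left
    intro x hx; exact Finset.mem_erase.2 ⟨by rintro rfl; exact hj hx, mem_univ _⟩
  have hcap : ((c.F j) ∩ (J.biUnion c.F)).card < c.ρ j := by
    calc ((c.F j) ∩ (J.biUnion c.F)).card
        ≤ (((Finset.univ.erase j).biUnion c.F) ∩ c.F j).card := by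
          apply Finset.card_le_card
          intro x hx; rw [Finset.mem_inter] at hx ⊢
          exact ⟨hsub hx.2, hx.1⟩
      _ < c.ρ j := c.hint j
  have hbi : (insert j J).biUnion c.F = c.F j ∪ J.biUnion c.F := Finset.biUnion_insert
  have hcard := Finset.card_union_add_card_inter (c.F j) (J.biUnion c.F)
  have hsum : ∑ i ∈ insert j J, (c.η i : ℤ) = (c.η j : ℤ) + ∑ i ∈ J, (c.η i : ℤ) :=
    Finset.sum_insert hj
  have hη := eta_cast c j
  have hcap' : ((c.F j ∩ J.biUnion c.F).card : ℤ) < (c.ρ j : ℤ) := by exact_mod_cast hcap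
  have hcard' : ((c.F j ∪ J.biUnion c.F).card : ℤ) + ((c.F j ∩ J.biUnion c.F).card : ℤ)
      = ((c.F j).card : ℤ) + ((J.biUnion c.F).card : ℤ) := by exact_mod_cast hcard
  unfold u
  rw [hbi, hsum]
  omega

lemma u_le_of_subset : ∀ (I J : Finset (Fin c.m)), J ⊆ I → u c J + ((I \ J).card : ℤ) ≤ u c I := by
  intro I
  induction I using Finset.strongInduction with
  | _ I ih =>
    intro J hJI
    rcases eq_or_ne J I with rfl | hne
    · simp
    · obtain ⟨j, hjI, hjJ⟩ : ∃ j ∈ I, j ∉ J := by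
        by_contra h; push_neg at h; exact hne (Finset.Subset.antisymm hJI h)
      have hJe : J ⊆ I.erase j := fun x hx => Finset.mem_erase.2 ⟨by rintro rfl; exact hjJ hx, hJI hx⟩
      have h1 := ih (I.erase j) (Finset.erase_ssubset hjI) J hJe
      have h2 : u c (I.erase j) + 1 ≤ u c I := by
        have := u_insert c (J := I.erase j) (j := j) (Finset.notMem_erase _ _)
        rwa [Finset.insert_erase hjI] at this
      have hcard : (I \ J).card = (I.erase j \ J).card + 1 := by
        have : I \ J = insert j (I.erase j \ J) := by
          ext x
          simp only [Finset.mem_sdiff, Finset.mem_insert, Finset.mem_erase]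
          constructor
          · rintro ⟨hxI, hxJ⟩
            rcases eq_or_ne x j with rfl | h; · exact Or.inl rfl
            · exact Or.inr ⟨⟨h, hxI⟩, hxJ⟩
          · rintro (rfl | ⟨⟨h, hxI⟩, hxJ⟩); exacts [⟨hjI, hjJ⟩, ⟨hxI, hxJ⟩]
        rw [this, Finset.card_insert_of_notMem (by simp)]
      push_cast [hcard]
      omega

lemma u_empty : u c ∅ = 0 := by simp [u]

lemma u_mono {J I : Finset (Fin c.m)} (h : J ⊆ I) : u c J ≤ u c I := by
  have := u_le_of_subset c I J h
  have : (0:ℤ) ≤ ((I \ J).card : ℤ) := Int.natCast_nonneg _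
  omega

lemma u_nonneg (I : Finset (Fin c.m)) : 0 ≤ u c I := by
  have := u_mono c (Finset.empty_subset I)
  rwa [u_empty] at this

lemma u_le_gv (X : Finset ℕ) (I : Finset (Fin c.m)) : u c I ≤ gv c X I := by
  unfold u gv
  have : (I.biUnion c.F).card ≤ (X ∪ I.biUnion c.F).card :=
    Finset.card_le_card Finset.subset_union_right
  omega

lemma gv_mono {X Y : Finset ℕ} (h : X ⊆ Y) (I : Finset (Fin c.m)) : gv c X I ≤ gv c Y I := by
  unfold gv
  have : (X ∪ I.biUnion c.F).card ≤ (Y ∪ I.biUnion c.F).card :=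
    Finset.card_le_card (Finset.union_subset_union_left h)
  omega

lemma gv_empty_idx (X : Finset ℕ) : gv c X ∅ = (X.card : ℤ) := by simp [gv]

lemma fv_le_gv (X : Finset ℕ) (I : Finset (Fin c.m)) : fv c X ≤ gv c X I :=
  le_trans (min_le_right _ _) (Finset.inf'_le _ (mem_univ I))

lemma fv_le_k (X : Finset ℕ) : fv c X ≤ (c.k : ℤ) := min_le_left _ _

lemma fv_nonneg (X : Finset ℕ) : 0 ≤ fv c X := by
  apply le_min (Int.natCast_nonneg _)
  apply Finset.le_inf'
  intro J _
  exact le_trans (u_nonneg c J) (u_le_gv c X J)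

lemma fv_le_card (X : Finset ℕ) : fv c X ≤ (X.card : ℤ) := by
  have := fv_le_gv c X ∅
  rwa [gv_empty_idx] at this

lemma fv_mono {X Y : Finset ℕ} (h : X ⊆ Y) : fv c X ≤ fv c Y := by
  refine le_min (fv_le_k c X) (Finset.le_inf' _ _ fun J _ => ?_)
  exact (fv_le_gv c X J).trans (gv_mono c h J)

lemma fv_cases (X : Finset ℕ) : fv c X = (c.k : ℤ) ∨ ∃ I, fv c X = gv c X I := by
  obtain ⟨I, _, hI⟩ := Finset.exists_mem_eq_inf' (univ_ne c) (gv c X)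
  rcases min_cases (c.k : ℤ) ((Finset.univ : Finset (Finset (Fin c.m))).inf' (univ_ne c) (gv c X)) with ⟨h, _⟩ | ⟨h, _⟩
  · exact Or.inl (by rw [fv, h])
  · exact Or.inr ⟨I, by rw [fv, h, hI]⟩

lemma fv_eq_gv_of_lt {X : Finset ℕ} (h : fv c X < (c.k : ℤ)) : ∃ I, fv c X = gv c X I := by
  rcases fv_cases c X with h' | h'
  · omega
  · exact h'


lemma gv_combine (X Y : Finset ℕ) (I J : Finset (Fin c.m)) :
    gv c (X ∪ Y) (I ∪ J) + gv c (X ∩ Y) (I ∩ J) ≤ gv c X I + gv c Y J := by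
  have hsum : ∑ i ∈ I ∪ J, (c.η i : ℤ) + ∑ i ∈ I ∩ J, (c.η i : ℤ)
      = ∑ i ∈ I, (c.η i : ℤ) + ∑ i ∈ J, (c.η i : ℤ) := Finset.sum_union_inter
  have hA : (X ∪ Y) ∪ (I ∪ J).biUnion c.F = (X ∪ I.biUnion c.F) ∪ (Y ∪ J.biUnion c.F) := by
    rw [biUnion_union_idx]
    ext x; simp only [Finset.mem_union]; tauto
  have hB : (X ∩ Y) ∪ (I ∩ J).biUnion c.F ⊆ (X ∪ I.biUnion c.F) ∩ (Y ∪ J.biUnion c.F) := by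
    intro x hx
    rw [Finset.mem_union] at hx
    rw [Finset.mem_inter, Finset.mem_union, Finset.mem_union]
    rcases hx with hx | hx
    · rw [Finset.mem_inter] at hx; exact ⟨Or.inl hx.1, Or.inl hx.2⟩
    · rw [Finset.mem_biUnion] at hx
      obtain ⟨i, hi, hxi⟩ := hx
      rw [Finset.mem_inter] at hi
      exact ⟨Or.inr (Finset.mem_biUnion.2 ⟨i, hi.1, hxi⟩),
             Or.inr (Finset.mem_biUnion.2 ⟨i, hi.2, hxi⟩)⟩
  have hcard := Finset.card_union_add_card_inter (X ∪ I.biUnion c.F) (Y ∪ J.biUnion c.F)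
  have h1 : ((X ∪ Y ∪ (I ∪ J).biUnion c.F).card : ℤ)
      = ((X ∪ I.biUnion c.F) ∪ (Y ∪ J.biUnion c.F)).card := by rw [hA]
  have h2 : (((X ∩ Y) ∪ (I ∩ J).biUnion c.F).card : ℤ)
      ≤ ((X ∪ I.biUnion c.F) ∩ (Y ∪ J.biUnion c.F)).card := by
    exact_mod_cast Finset.card_le_card hB
  have hcard' : (((X ∪ I.biUnion c.F) ∪ (Y ∪ J.biUnion c.F)).card : ℤ)
      + (((X ∪ I.biUnion c.F) ∩ (Y ∪ J.biUnion c.F)).card : ℤ)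
      = ((X ∪ I.biUnion c.F).card : ℤ) + ((Y ∪ J.biUnion c.F).card : ℤ) := by exact_mod_cast hcard
  unfold gv
  omega

lemma fv_submodular (X Y : Finset ℕ) :
    fv c (X ∪ Y) + fv c (X ∩ Y) ≤ fv c X + fv c Y := by
  rcases fv_cases c X with hX | ⟨I, hX⟩ <;> rcases fv_cases c Y with hY | ⟨J, hY⟩
  · calc fv c (X ∪ Y) + fv c (X ∩ Y) ≤ (c.k : ℤ) + (c.k : ℤ) :=
          add_le_add (fv_le_k c _) (fv_le_k c _)
      _ = fv c X + fv c Y := by rw [hX, hY]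
  · have h1 : fv c (X ∪ Y) ≤ fv c X := by rw [hX]; exact fv_le_k c _
    have h2 : fv c (X ∩ Y) ≤ fv c Y := by
      rw [hY]
      exact (fv_le_gv c _ J).trans (gv_mono c Finset.inter_subset_right J)
    omega
  · have h1 : fv c (X ∪ Y) ≤ fv c Y := by rw [hY]; exact fv_le_k c _
    have h2 : fv c (X ∩ Y) ≤ fv c X := by
      rw [hX]
      exact (fv_le_gv c _ I).trans (gv_mono c Finset.inter_subset_left I)
    omega
  · have h1 : fv c (X ∪ Y) ≤ gv c (X ∪ Y) (I ∪ J) := fv_le_gv c _ _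
    have h2 : fv c (X ∩ Y) ≤ gv c (X ∩ Y) (I ∩ J) := fv_le_gv c _ _
    have h3 := gv_combine c X Y I J
    omega

lemma fv_insert_le (y : ℕ) (X : Finset ℕ) : fv c (insert y X) ≤ fv c X + 1 := by
  obtain ⟨I₀, _, hI₀⟩ := Finset.exists_mem_eq_inf' (univ_ne c) (gv c X)
  have hg : gv c (insert y X) I₀ ≤ gv c X I₀ + 1 := by
    unfold gv
    have h1 : insert y X ∪ I₀.biUnion c.F = insert y (X ∪ I₀.biUnion c.F) := by
      rw [Finset.insert_union]
    have h2 : (insert y (X ∪ I₀.biUnion c.F)).card ≤ (X ∪ I₀.biUnion c.F).card + 1 :=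
      Finset.card_insert_le _ _
    rw [h1]
    omega
  rcases min_cases ((c.k : ℤ)) ((Finset.univ : Finset (Finset (Fin c.m))).inf' (univ_ne c) (gv c X)) with ⟨h, _⟩ | ⟨h, h'⟩
  · have : fv c X = (c.k : ℤ) := by rw [fv, h]
    have := fv_le_k c (insert y X)
    omega
  · have : fv c X = gv c X I₀ := by rw [fv, h, hI₀]
    have := fv_le_gv c (insert y X) I₀
    omega

lemma fv_le_erase_add_one (x : ℕ) (X : Finset ℕ) : fv c X ≤ fv c (X.erase x) + 1 := by
  have h : X ⊆ insert x (X.erase x) := by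
    intro a ha
    rcases eq_or_ne a x with rfl | hne
    · exact Finset.mem_insert_self _ _
    · exact Finset.mem_insert_of_mem (Finset.mem_erase.2 ⟨hne, ha⟩)
  exact (fv_mono c h).trans (fv_insert_le c x _)

lemma fv_empty : fv c ∅ = 0 := by
  have h1 := fv_le_card c ∅
  have h2 := fv_nonneg c ∅
  simp at h1
  omega

lemma fv_union_le (X S : Finset ℕ) : fv c (X ∪ S) ≤ fv c X + S.card := by
  induction S using Finset.induction with
  | empty => simp
  | @insert a S ha ih =>
    have h1 : X ∪ insert a S = insert a (X ∪ S) := by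
      ext z; simp only [Finset.mem_union, Finset.mem_insert]; tauto
    rw [h1, Finset.card_insert_of_notMem ha]
    have := fv_insert_le c a (X ∪ S)
    push_cast
    omega

lemma indep_subset {W X : Finset ℕ} (hW : fv c W = (W.card : ℤ)) (h : X ⊆ W) :
    fv c X = (X.card : ℤ) := by
  have h1 : W = X ∪ (W \ X) := by
    ext z; simp only [Finset.mem_union, Finset.mem_sdiff]; tauto
  have h2 : fv c W ≤ fv c X + ((W \ X).card : ℤ) := by
    calc fv c W = fv c (X ∪ (W \ X)) := by rw [← h1]
      _ ≤ fv c X + ((W \ X).card : ℤ) := fv_union_le c X (W \ X)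
  have h3 : (W \ X).card = W.card - X.card := Finset.card_sdiff_of_subset h
  have h4 : X.card ≤ W.card := Finset.card_le_card h
  have h5 := fv_le_card c X
  have h6 : ((W \ X).card : ℤ) = (W.card : ℤ) - X.card := by rw [h3]; push_cast [h4]; omega
  omega

lemma indep_of_forall_erase : ∀ (Y : Finset ℕ), (∀ y ∈ Y, fv c (Y.erase y) < fv c Y) →
    fv c Y = (Y.card : ℤ) := by
  intro Y
  induction Y using Finset.strongInduction with
  | _ Y ih =>
    intro hY
    rcases Finset.eq_empty_or_nonempty Y with rfl | ⟨y, hy⟩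
    · simp [fv_empty]
    · have hYy : ∀ z ∈ Y.erase y, fv c ((Y.erase y).erase z) < fv c (Y.erase y) := by
        intro z hz
        have hzY : z ∈ Y := Finset.mem_of_mem_erase hz
        have hzy : z ≠ y := Finset.ne_of_mem_erase hz
        have hun : (Y.erase y) ∪ (Y.erase z) = Y := by
          ext a
          simp only [Finset.mem_union, Finset.mem_erase]
          constructor
          · rintro (⟨_, h⟩ | ⟨_, h⟩) <;> exact h
          · intro ha
            rcases eq_or_ne a y with rfl | h
            · exact Or.inr ⟨fun h => hzy h.symm, ha⟩
            · exact Or.inl ⟨h, ha⟩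
        have hin : (Y.erase y) ∩ (Y.erase z) = (Y.erase y).erase z := by
          ext a
          simp only [Finset.mem_inter, Finset.mem_erase]
          tauto
        have hsub := fv_submodular c (Y.erase y) (Y.erase z)
        rw [hun, hin] at hsub
        have h1 := hY y hy
        have h2 := hY z hzY
        have h3 := fv_le_erase_add_one c y Y
        have h4 := fv_le_erase_add_one c z Y
        omega
      have hIH := ih (Y.erase y) (Finset.erase_ssubset hy) hYy
      have h1 := hY y hy
      have h2 := fv_le_erase_add_one c y Y
      have h3 : (Y.erase y).card = Y.card - 1 := Finset.card_erase_of_mem hy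
      have h4 : 1 ≤ Y.card := Finset.card_pos.2 ⟨y, hy⟩
      have h5 : ((Y.erase y).card : ℤ) = (Y.card : ℤ) - 1 := by rw [h3]; push_cast [h4]; omega
      omega

lemma exists_erase_eq_of_dep {Y : Finset ℕ} (h : fv c Y < (Y.card : ℤ)) :
    ∃ y ∈ Y, fv c (Y.erase y) = fv c Y := by
  by_contra hc
  push_neg at hc
  have : ∀ y ∈ Y, fv c (Y.erase y) < fv c Y := fun y hy =>
    lt_of_le_of_ne (fv_mono c (Finset.erase_subset _ _)) (hc y hy)
  have := indep_of_forall_erase c Y this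
  omega

/-- Circuit existence at the `fv` level. -/
lemma circuit_exists {Z : Finset ℕ} {x : ℕ} (hx : x ∈ Z)
    (h : fv c (Z.erase x) = fv c Z) :
    ∃ C, C ⊆ Z ∧ x ∈ C ∧ fv c C < (C.card : ℤ) ∧ ∀ X ⊂ C, fv c X = (X.card : ℤ) := by
  classical
  set cand := (Z.erase x).powerset.filter (fun Y => fv c (insert x Y) = fv c Y) with hcand
  have hne : (Z.erase x) ∈ cand := by
    rw [hcand, Finset.mem_filter]
    refine ⟨Finset.mem_powerset.2 (Finset.Subset.refl _), ?_⟩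
    rw [Finset.insert_erase hx, h]
  obtain ⟨Y₀, hY₀mem, hY₀min⟩ := Finset.exists_min_image cand (fun Y => Y.card) ⟨_, hne⟩
  rw [hcand, Finset.mem_filter, Finset.mem_powerset] at hY₀mem
  obtain ⟨hY₀sub, hY₀eq⟩ := hY₀mem
  have hxY₀ : x ∉ Y₀ := fun hmem => (Finset.notMem_erase x Z) (hY₀sub hmem)
  -- Y₀ is independent
  have hY₀indep : fv c Y₀ = (Y₀.card : ℤ) := by
    by_contra hdep
    have hlt : fv c Y₀ < (Y₀.card : ℤ) := lt_of_le_of_ne (fv_le_card c Y₀) hdep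
    obtain ⟨y, hy, hz⟩ := exists_erase_eq_of_dep c hlt
    have h1 : fv c (insert x (Y₀.erase y)) = fv c (Y₀.erase y) := by
      apply le_antisymm
      · calc fv c (insert x (Y₀.erase y)) ≤ fv c (insert x Y₀) := by
              apply fv_mono
              intro a ha
              rcases Finset.mem_insert.1 ha with rfl | ha
              · exact Finset.mem_insert_self _ _
              · exact Finset.mem_insert_of_mem (Finset.mem_of_mem_erase ha)
          _ = fv c Y₀ := hY₀eq
          _ = fv c (Y₀.erase y) := hz.symm
      · exact fv_mono c (Finset.subset_insert _ _)
    have hmem : (Y₀.erase y) ∈ cand := by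
      rw [hcand, Finset.mem_filter, Finset.mem_powerset]
      exact ⟨(Finset.erase_subset _ _).trans hY₀sub, h1⟩
    have := hY₀min _ hmem
    have := Finset.card_erase_of_mem hy
    have h4 : 1 ≤ Y₀.card := Finset.card_pos.2 ⟨y, hy⟩
    omega
  refine ⟨insert x Y₀, ?_, Finset.mem_insert_self _ _, ?_, ?_⟩
  · intro a ha
    rcases Finset.mem_insert.1 ha with rfl | ha
    · exact hx
    · exact Finset.mem_of_mem_erase (hY₀sub ha)
  · rw [hY₀eq, hY₀indep, Finset.card_insert_of_notMem hxY₀]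
    push_cast
    omega
  · intro X hX
    have hXsub : X ⊆ insert x Y₀ := hX.subset
    by_cases hxX : x ∈ X
    · -- X = insert x Y' with Y' ⊊ Y₀
      set Y' := X.erase x with hY'
      have hY'sub : Y' ⊆ Y₀ := by
        intro a ha
        have haX : a ∈ X := Finset.mem_of_mem_erase ha
        have hax : a ≠ x := Finset.ne_of_mem_erase ha
        rcases Finset.mem_insert.1 (hXsub haX) with rfl | h'
        · exact absurd rfl hax
        · exact h'
      have hY'ne : Y' ≠ Y₀ := by
        rintro hEq
        apply hX.ne
        rw [← Finset.insert_erase hxX, ← hY', hEq]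
      have hY'ssub : Y' ⊂ Y₀ := ssubset_of_subset_of_ne hY'sub hY'ne
      have hXeq : X = insert x Y' := (Finset.insert_erase hxX).symm
      have hY'indep : fv c Y' = (Y'.card : ℤ) := indep_subset c hY₀indep hY'sub
      have hcardX : (X.card : ℤ) = (Y'.card : ℤ) + 1 := by
        rw [hXeq, Finset.card_insert_of_notMem (Finset.notMem_erase _ _)]
        push_cast; ring
      by_contra hne
      have hlt : fv c X < (X.card : ℤ) := lt_of_le_of_ne (fv_le_card c X) hne
      have hge : fv c Y' ≤ fv c X := by rw [hXeq]; exact fv_mono c (Finset.subset_insert _ _)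
      have hle : fv c X ≤ fv c Y' + 1 := by
        rw [hXeq]; exact fv_insert_le c x Y'
      have hfvX : fv c X = fv c Y' := by omega
      have hmem : Y' ∈ cand := by
        rw [hcand, Finset.mem_filter, Finset.mem_powerset]
        refine ⟨hY'sub.trans hY₀sub, ?_⟩
        rw [← hXeq, hfvX]
      have := hY₀min _ hmem
      have := Finset.card_lt_card hY'ssub
      omega
    · -- X ⊆ Y₀
      have : X ⊆ Y₀ := fun a ha => by
        rcases Finset.mem_insert.1 (hXsub ha) with rfl | h'
        · exact absurd ha hxX
        · exact h'
      exact indep_subset c hY₀indep this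

lemma sum_union_decomp (I J : Finset (Fin c.m)) :
    ∑ i ∈ I ∪ J, (c.η i : ℤ) = ∑ i ∈ I \ J, (c.η i : ℤ) + ∑ i ∈ J, (c.η i : ℤ) := by
  rw [← Finset.sum_union (Finset.sdiff_disjoint), Finset.sdiff_union_self_eq_union]

lemma sum_sdiff_nonneg (I J : Finset (Fin c.m)) : 0 ≤ ∑ i ∈ I \ J, (c.η i : ℤ) :=
  sum_eta_nonneg c _

lemma gv_biUnion (I J : Finset (Fin c.m)) :
    gv c (I.biUnion c.F) J = u c (I ∪ J) + ∑ i ∈ I \ J, (c.η i : ℤ) := by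
  unfold gv u
  rw [← biUnion_union_idx, sum_union_decomp]
  ring

lemma fv_biUnion (I : Finset (Fin c.m)) :
    fv c (I.biUnion c.F) = min (u c I) (c.k : ℤ) := by
  have hinf : (Finset.univ : Finset (Finset (Fin c.m))).inf' (univ_ne c) (gv c (I.biUnion c.F))
      = u c I := by
    apply le_antisymm
    · refine le_trans (Finset.inf'_le _ (mem_univ I)) ?_
      rw [gv_biUnion]
      simp [u_mono]
    · apply Finset.le_inf'
      intro J _
      rw [gv_biUnion]
      have h1 : u c I ≤ u c (I ∪ J) := u_mono c Finset.subset_union_left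
      have h2 := sum_sdiff_nonneg c I J
      omega
  rw [fv, hinf, min_comm]

lemma u_le_gv_biUnion_erase {I : Finset (Fin c.m)} {x : ℕ} (hx : x ∈ I.biUnion c.F)
    (J : Finset (Fin c.m)) : u c I ≤ gv c ((I.biUnion c.F).erase x) J := by
  by_cases hxJ : x ∈ J.biUnion c.F
  · have hun : ((I.biUnion c.F).erase x) ∪ J.biUnion c.F = (I ∪ J).biUnion c.F := by
      rw [biUnion_union_idx]
      ext a
      simp only [Finset.mem_union, Finset.mem_erase]
      constructor
      · rintro (⟨_, h⟩ | h); exacts [Or.inl h, Or.inr h]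
      · rintro (h | h)
        · rcases eq_or_ne a x with rfl | hax
          · exact Or.inr hxJ
          · exact Or.inl ⟨hax, h⟩
        · exact Or.inr h
    unfold gv
    rw [hun]
    have h1 : u c I ≤ u c (I ∪ J) := u_mono c Finset.subset_union_left
    have h2 := sum_sdiff_nonneg c I J
    have h3 : ((I ∪ J).biUnion c.F).card = ((I ∪ J).biUnion c.F).card := rfl
    have := sum_union_decomp c I J
    unfold u at h1
    have h5 : u c I = ((I.biUnion c.F).card : ℤ) - ∑ i ∈ I, (c.η i : ℤ) := rfl
    omega
  · obtain ⟨i, hiI, hxi⟩ := Finset.mem_biUnion.1 hx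
    have hiJ : i ∉ J := fun hiJ => hxJ (Finset.mem_biUnion.2 ⟨i, hiJ, hxi⟩)
    have hcard : ((I ∪ J).biUnion c.F).card ≤ (((I.biUnion c.F).erase x) ∪ J.biUnion c.F).card + 1 := by
      have hsub : (I ∪ J).biUnion c.F ⊆ insert x (((I.biUnion c.F).erase x) ∪ J.biUnion c.F) := by
        intro a ha
        rw [biUnion_union_idx, Finset.mem_union] at ha
        rcases eq_or_ne a x with rfl | hax
        · exact Finset.mem_insert_self _ _
        · apply Finset.mem_insert_of_mem
          rw [Finset.mem_union]
          rcases ha with h | h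
          · exact Or.inl (Finset.mem_erase.2 ⟨hax, h⟩)
          · exact Or.inr h
      calc ((I ∪ J).biUnion c.F).card ≤ (insert x (((I.biUnion c.F).erase x) ∪ J.biUnion c.F)).card :=
            Finset.card_le_card hsub
        _ ≤ (((I.biUnion c.F).erase x) ∪ J.biUnion c.F).card + 1 := Finset.card_insert_le _ _
    have hηi : 1 ≤ (c.η i : ℤ) := eta_pos c i
    have hile : (c.η i : ℤ) ≤ ∑ j ∈ I \ J, (c.η j : ℤ) :=
      Finset.single_le_sum (fun j _ => Int.natCast_nonneg _) (Finset.mem_sdiff.2 ⟨hiI, hiJ⟩)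
    have h1 : u c I ≤ u c (I ∪ J) := u_mono c Finset.subset_union_left
    have hsum := sum_union_decomp c I J
    unfold gv
    have h6 : u c (I ∪ J) = (((I ∪ J).biUnion c.F).card : ℤ) - ∑ i ∈ I ∪ J, (c.η i : ℤ) := rfl
    have h5 : u c I = ((I.biUnion c.F).card : ℤ) - ∑ i ∈ I, (c.η i : ℤ) := rfl
    unfold u at h1
    omega

lemma fv_biUnion_erase {I : Finset (Fin c.m)} {x : ℕ} (hx : x ∈ I.biUnion c.F) :
    fv c ((I.biUnion c.F).erase x) = fv c (I.biUnion c.F) := by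
  apply le_antisymm (fv_mono c (Finset.erase_subset _ _))
  rw [fv_biUnion, fv, min_comm]
  apply min_le_min (le_refl _)
  apply Finset.le_inf'
  intro J _
  exact u_le_gv_biUnion_erase c hx J

lemma fv_lt_insert {I : Finset (Fin c.m)} {y : ℕ}
    (hu : u c I < (c.k : ℤ)) (hy : y ∉ I.biUnion c.F) :
    fv c (I.biUnion c.F) < fv c (insert y (I.biUnion c.F)) := by
  have hbound : ∀ J : Finset (Fin c.m), u c I + 1 ≤ gv c (insert y (I.biUnion c.F)) J := by
    intro J
    by_cases hyJ : y ∈ J.biUnion c.F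
    · obtain ⟨j, hjJ, hyj⟩ := Finset.mem_biUnion.1 hyJ
      have hjI : j ∉ I := fun hjI => hy (Finset.mem_biUnion.2 ⟨j, hjI, hyj⟩)
      have hun : insert y (I.biUnion c.F) ∪ J.biUnion c.F = (I ∪ J).biUnion c.F := by
        rw [biUnion_union_idx, Finset.insert_union]
        rw [Finset.insert_eq_self.2 (Finset.mem_union.2 (Or.inr hyJ))]
      have h1 : u c (insert j I) ≤ u c (I ∪ J) := by
        apply u_mono
        intro a ha
        rcases Finset.mem_insert.1 ha with rfl | ha
        · exact Finset.mem_union.2 (Or.inr hjJ)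
        · exact Finset.mem_union.2 (Or.inl ha)
      have h2 := u_insert c hjI
      have h3 := sum_sdiff_nonneg c I J
      have hsum := sum_union_decomp c I J
      unfold gv
      rw [hun]
      have h4 : u c (I ∪ J) = (((I ∪ J).biUnion c.F).card : ℤ) - ∑ i ∈ I ∪ J, (c.η i : ℤ) := rfl
      have h5 : u c I = ((I.biUnion c.F).card : ℤ) - ∑ i ∈ I, (c.η i : ℤ) := rfl
      omega
    · have hcard : ((I ∪ J).biUnion c.F).card + 1 ≤ (insert y (I.biUnion c.F) ∪ J.biUnion c.F).card := by
        have hins : insert y (I.biUnion c.F) ∪ J.biUnion c.F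
            = insert y ((I ∪ J).biUnion c.F) := by
          rw [biUnion_union_idx, Finset.insert_union]
        rw [hins, Finset.card_insert_of_notMem]
        rw [biUnion_union_idx, Finset.mem_union]
        rintro (h | h); exacts [hy h, hyJ h]
      have h1 : u c I ≤ u c (I ∪ J) := u_mono c Finset.subset_union_left
      have h3 := sum_sdiff_nonneg c I J
      have hsum := sum_union_decomp c I J
      unfold gv
      unfold u at h1 ⊢
      omega
  have hge : min ((c.k : ℤ)) (u c I + 1) ≤ fv c (insert y (I.biUnion c.F)) := by
    apply le_min (min_le_left _ _)
    refine le_trans (min_le_right _ _) ?_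
    exact Finset.le_inf' _ _ fun J _ => hbound J
  rw [fv_biUnion]
  have : min (u c I) (c.k : ℤ) = u c I := min_eq_left (le_of_lt hu)
  omega

lemma u_univ_ge_k : (c.k : ℤ) ≤ u c Finset.univ := by
  have h := c.hdim
  unfold u
  have : ∑ i, (((c.F i).card : ℤ) - (c.ρ i : ℤ)) = ∑ i, (c.η i : ℤ) :=
    Finset.sum_congr rfl fun i _ => (eta_cast c i).symm
  rw [this] at h
  exact h

lemma fv_ground : fv c (Finset.univ.biUnion c.F) = (c.k : ℤ) := by
  rw [fv_biUnion]
  exact min_eq_right (u_univ_ge_k c)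

/-- the rank function, as a natural number. -/
def rkv (X : Finset ℕ) : ℕ := (fv c X).toNat

lemma rkv_cast (X : Finset ℕ) : (rkv c X : ℤ) = fv c X := Int.toNat_of_nonneg (fv_nonneg c X)

lemma rkv_congr {X Y : Finset ℕ} (h : fv c X = fv c Y) : rkv c X = rkv c Y := by
  unfold rkv; rw [h]

lemma fv_congr_of_rkv {X Y : Finset ℕ} (h : rkv c X = rkv c Y) : fv c X = fv c Y := by
  rw [← rkv_cast, ← rkv_cast, h]

lemma union_inst (inst : DecidableEq ℕ) (X Y : Finset ℕ) :
    @Union.union _ (@Finset.instUnion ℕ inst) X Y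
      = @Union.union _ (@Finset.instUnion ℕ instDecidableEqNat) X Y := by ext a; simp
lemma inter_inst (inst : DecidableEq ℕ) (X Y : Finset ℕ) :
    @Inter.inter _ (@Finset.instInter ℕ inst) X Y
      = @Inter.inter _ (@Finset.instInter ℕ instDecidableEqNat) X Y := by ext a; simp
lemma insert_inst (inst : DecidableEq ℕ) (y : ℕ) (X : Finset ℕ) :
    @insert ℕ (Finset ℕ) (@Finset.instInsert ℕ inst) y X
      = @insert ℕ (Finset ℕ) (@Finset.instInsert ℕ instDecidableEqNat) y X := by ext a; simp

/-- The matroid of Construction 1. -/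
def M : FinMatroid ℕ where
  E := c.E
  rk := rkv c
  rk_le_card := by
    intro X _
    have h := fv_le_card c X
    have h2 := rkv_cast c X
    exact_mod_cast h2 ▸ h
  rk_mono := by
    intro X Y hXY _
    have h := fv_mono c hXY
    have h2 := rkv_cast c X
    have h3 := rkv_cast c Y
    omega
  rk_submodular := by
    intro X Y _ _
    rw [union_inst, inter_inst]
    have h := fv_submodular c X Y
    have h1 := rkv_cast c (X ∪ Y)
    have h2 := rkv_cast c (X ∩ Y)
    have h3 := rkv_cast c X
    have h4 := rkv_cast c Y
    omega

lemma M_E : (M c).E = c.E := rfl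
lemma M_rk (X : Finset ℕ) : (M c).rk X = rkv c X := rfl

lemma closure_eq_of {Z : Finset ℕ} (hZ : Z ⊆ c.E)
    (h : ∀ y ∈ c.E, y ∉ Z → rkv c (insert y Z) ≠ rkv c Z) : (M c).closure Z = Z := by
  unfold FinMatroid.closure
  ext a
  rw [Finset.mem_filter]
  constructor
  · rintro ⟨haE, har⟩
    by_contra haZ
    exact h a haE haZ har
  · intro haZ
    refine ⟨hZ haZ, ?_⟩
    rw [M_rk, M_rk, Finset.insert_eq_self.2 haZ]

lemma mem_of_closure {Z : Finset ℕ} (hcl : (M c).closure Z = Z) {y : ℕ}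
    (hy : y ∈ c.E) (hr : rkv c (insert y Z) = rkv c Z) : y ∈ Z := by
  rw [← hcl]
  exact Finset.mem_filter.2 ⟨hy, hr⟩

lemma subE_of_biUnion (I : Finset (Fin c.m)) : I.biUnion c.F ⊆ c.E :=
  Finset.biUnion_subset_biUnion_of_subset_left c.F (Finset.subset_univ I)

lemma isCircuit_iff_fv {C : Finset ℕ} (hCE : C ⊆ c.E) :
    (M c).IsCircuit C ↔
      (fv c C < (C.card : ℤ) ∧ ∀ X, X ⊂ C → fv c X = (X.card : ℤ)) := by
  constructor
  · rintro ⟨_, h1, h2⟩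
    rw [M_rk] at h1
    constructor
    · have := rkv_cast c C; omega
    · intro X hX
      have := h2 X hX
      rw [M_rk] at this
      have h3 := rkv_cast c X
      omega
  · rintro ⟨h1, h2⟩
    refine ⟨hCE, ?_, ?_⟩
    · rw [M_rk]; have := rkv_cast c C; omega
    · intro X hX
      have := h2 X hX
      rw [M_rk]
      have h3 := rkv_cast c X
      omega

lemma isCyclicFlat_biUnion {I : Finset (Fin c.m)}
    (h : u c I < (c.k : ℤ) ∨ I = Finset.univ) : (M c).IsCyclicFlat (I.biUnion c.F) := by
  have hsubE : I.biUnion c.F ⊆ c.E := subE_of_biUnion c I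
  constructor
  · refine ⟨hsubE, ?_⟩
    apply closure_eq_of c hsubE
    intro y hyE hyF
    rcases h with h | rfl
    · have hlt := fv_lt_insert c h hyF
      intro heq
      have := fv_congr_of_rkv c heq
      omega
    · exact absurd hyE hyF
  · refine ⟨hsubE, ?_⟩
    intro x hx
    obtain ⟨C, hCsub, hxC, hdep, hindep⟩ := circuit_exists c hx (fv_biUnion_erase c hx)
    exact ⟨C, hCsub, (isCircuit_iff_fv c (hCsub.trans hsubE)).2 ⟨hdep, hindep⟩, hxC⟩

lemma gv_union_min {Z : Finset ℕ} {J J' : Finset (Fin c.m)}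
    (hJ : gv c Z J = fv c Z) (hJ' : gv c Z J' = fv c Z) : gv c Z (J ∪ J') = fv c Z := by
  have h := gv_combine c Z Z J J'
  rw [Finset.union_self, Finset.inter_self] at h
  have h1 := fv_le_gv c Z (J ∪ J')
  have h2 := fv_le_gv c Z (J ∩ J')
  omega

lemma sup_minimizer {Z : Finset ℕ} :
    ∀ (S : Finset (Finset (Fin c.m))), S.Nonempty → (∀ J ∈ S, gv c Z J = fv c Z) →
      gv c Z (S.sup id) = fv c Z := by
  intro S
  induction S using Finset.induction with
  | empty => rintro ⟨x, hx⟩; exact absurd hx (Finset.notMem_empty x)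
  | @insert a S ha ih =>
    intro _ hall
    rcases Finset.eq_empty_or_nonempty S with rfl | hSne
    · simpa using hall a (Finset.mem_insert_self _ _)
    · rw [Finset.sup_insert]
      have h1 := hall a (Finset.mem_insert_self _ _)
      have h2 := ih hSne (fun J hJ => hall J (Finset.mem_insert_of_mem hJ))
      have : (id a) ⊔ (S.sup id) = a ∪ S.sup id := rfl
      rw [this]
      exact gv_union_min c h1 h2

lemma subset_of_minimizer {Z : Finset ℕ} {J : Finset (Fin c.m)}
    (hcl : (M c).closure Z = Z) (hmin : gv c Z J = fv c Z) : J.biUnion c.F ⊆ Z := by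
  intro y hy
  by_contra hyZ
  have hyE : y ∈ c.E := subE_of_biUnion c J hy
  have hun : insert y Z ∪ J.biUnion c.F = Z ∪ J.biUnion c.F := by
    rw [Finset.insert_union, Finset.insert_eq_self.2 (Finset.mem_union.2 (Or.inr hy))]
  have hle : fv c (insert y Z) ≤ fv c Z := by
    calc fv c (insert y Z) ≤ gv c (insert y Z) J := fv_le_gv c _ J
      _ = gv c Z J := by unfold gv; rw [hun]
      _ = fv c Z := hmin
  have heq : fv c (insert y Z) = fv c Z :=
    le_antisymm hle (fv_mono c (Finset.subset_insert _ _))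
  exact hyZ (mem_of_closure c hcl hyE (rkv_congr c heq))

lemma circuit_subset_FJ {C : Finset ℕ} {J : Finset (Fin c.m)}
    (hdep : fv c C < (C.card : ℤ)) (hmin : gv c C J = fv c C)
    (hindep : ∀ X, X ⊂ C → fv c X = (X.card : ℤ)) : C ⊆ J.biUnion c.F := by
  intro x hxC
  by_contra hxJ
  have hun : (C.erase x) ∪ J.biUnion c.F = (C ∪ J.biUnion c.F).erase x := by
    rw [Finset.erase_union_distrib, Finset.erase_eq_of_notMem hxJ]
  have hxCU : x ∈ C ∪ J.biUnion c.F := Finset.mem_union.2 (Or.inl hxC)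
  have hcard : ((C ∪ J.biUnion c.F).erase x).card = (C ∪ J.biUnion c.F).card - 1 :=
    Finset.card_erase_of_mem hxCU
  have hpos : 1 ≤ (C ∪ J.biUnion c.F).card := Finset.card_pos.2 ⟨x, hxCU⟩
  have herase : gv c (C.erase x) J = gv c C J - 1 := by
    unfold gv
    rw [hun, hcard]
    push_cast [hpos]
    omega
  have h1 : fv c (C.erase x) ≤ fv c C - 1 := by
    have := fv_le_gv c (C.erase x) J
    omega
  have h2 : fv c (C.erase x) = ((C.erase x).card : ℤ) :=
    hindep _ (Finset.erase_ssubset hxC)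
  have h3 : (C.erase x).card = C.card - 1 := Finset.card_erase_of_mem hxC
  have h4 : 1 ≤ C.card := Finset.card_pos.2 ⟨x, hxC⟩
  have h5 : ((C.erase x).card : ℤ) = (C.card : ℤ) - 1 := by rw [h3]; push_cast [h4]; omega
  omega

lemma main_rank_biUnion (I : Finset (Fin c.m)) :
    ((M c).rk (I.biUnion c.F) : ℤ) =
      min (((I.biUnion c.F).card : ℤ) - ∑ i ∈ I, (c.η i : ℤ)) (c.k : ℤ) := by
  rw [M_rk, rkv_cast, fv_biUnion]
  rfl

lemma main_rank_ground : (M c).rk c.E = c.k := by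
  have h : fv c c.E = (c.k : ℤ) := fv_ground c
  rw [M_rk]
  unfold rkv
  rw [h]
  exact Int.toNat_natCast _

lemma main_cyclic_flats (Z : Finset ℕ) :
    (M c).IsCyclicFlat Z ↔
      (Z = c.E ∨ ∃ I : Finset (Fin c.m),
        ((I.biUnion c.F).card : ℤ) - ∑ i ∈ I, (c.η i : ℤ) < (c.k : ℤ) ∧
        Z = I.biUnion c.F) := by
  constructor
  · rintro ⟨⟨hZE, hcl⟩, ⟨-, hcyc⟩⟩
    by_cases hk : fv c Z < (c.k : ℤ)
    · right
      obtain ⟨J₀, hJ₀⟩ := fv_eq_gv_of_lt c hk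
      set 𝒥 := Finset.univ.filter (fun J => gv c Z J = fv c Z) with h𝒥
      have h𝒥ne : 𝒥.Nonempty := ⟨J₀, Finset.mem_filter.2 ⟨mem_univ _, hJ₀.symm⟩⟩
      set Js := 𝒥.sup id with hJsdef
      have hJs : gv c Z Js = fv c Z :=
        sup_minimizer c 𝒥 h𝒥ne (fun J hJ => (Finset.mem_filter.1 hJ).2)
      have hFJs : Js.biUnion c.F ⊆ Z := subset_of_minimizer c hcl hJs
      have hZF : Z ⊆ Js.biUnion c.F := by
        intro x hxZ
        obtain ⟨C, hCZ, hCcirc, hxC⟩ := hcyc x hxZ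
        obtain ⟨hdep, hindep⟩ := (isCircuit_iff_fv c (hCZ.trans hZE)).1 hCcirc
        have hCk : fv c C < (c.k : ℤ) := lt_of_le_of_lt (fv_mono c hCZ) hk
        obtain ⟨J_C, hJC⟩ := fv_eq_gv_of_lt c hCk
        have hCsub : C ⊆ J_C.biUnion c.F := circuit_subset_FJ c hdep hJC.symm hindep
        have hcomb := gv_combine c C Z J_C Js
        rw [Finset.union_eq_right.2 hCZ, Finset.inter_eq_left.2 hCZ] at hcomb
        have hge := fv_le_gv c Z (J_C ∪ Js)
        have hgeC := fv_le_gv c C (J_C ∩ Js)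
        have hmin2 : gv c Z (J_C ∪ Js) = fv c Z := le_antisymm (by omega) hge
        have hmem : (J_C ∪ Js) ∈ 𝒥 := Finset.mem_filter.2 ⟨mem_univ _, hmin2⟩
        have hsub2 : J_C ∪ Js ⊆ Js := by
          have := Finset.le_sup (f := id) hmem
          rw [← hJsdef] at this
          exact this
        have hJCJs : J_C ⊆ Js := Finset.subset_union_left.trans hsub2
        exact Finset.biUnion_subset_biUnion_of_subset_left c.F hJCJs (hCsub hxC)
      have hZeq : Z = Js.biUnion c.F := Finset.Subset.antisymm hZF hFJs
      refine ⟨Js, ?_, hZeq⟩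
      show u c Js < (c.k : ℤ)
      have h1 : gv c (Js.biUnion c.F) Js = u c (Js ∪ Js) + ∑ i ∈ Js \ Js, (c.η i : ℤ) :=
        gv_biUnion c Js Js
      rw [Finset.union_self, Finset.sdiff_self, Finset.sum_empty, add_zero] at h1
      have h2 : gv c (Js.biUnion c.F) Js = fv c Z := by rw [← hZeq]; exact hJs
      have h3 : fv c Z < (c.k : ℤ) := hk
      omega
    · left
      have hfvZ : fv c Z = (c.k : ℤ) := le_antisymm (fv_le_k c Z) (not_lt.1 hk)
      apply Finset.Subset.antisymm hZE
      intro y hyE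
      by_contra hyZ
      have heq : fv c (insert y Z) = fv c Z := by
        apply le_antisymm
        · rw [hfvZ]; exact fv_le_k c _
        · exact fv_mono c (Finset.subset_insert _ _)
      exact hyZ (mem_of_closure c hcl hyE (rkv_congr c heq))
  · rintro (rfl | ⟨I, hI, rfl⟩)
    · exact isCyclicFlat_biUnion c (Or.inr rfl)
    · exact isCyclicFlat_biUnion c (Or.inl hI)

end C1

/-- Every Construction-1 configuration yields a matroid on its ground set `E` whose
rank on each union `F_I` is `min{|F_I| - ∑_{i∈I} η i, k}`, whose rank is `k`, and
whose cyclic flats are exactly the sets `F_I` with `|F_I| - ∑_{i∈I} η i < k`,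
together with `E`. -/
theorem constr1_yields_matroid (c : Constr1Config) :
    ∃ M : FinMatroid ℕ, M.E = c.E ∧
      (∀ I : Finset (Fin c.m),
        (M.rk (I.biUnion c.F) : ℤ) =
          min (((I.biUnion c.F).card : ℤ) - ∑ i ∈ I, (c.η i : ℤ)) (c.k : ℤ)) ∧
      M.rk c.E = c.k ∧
      (∀ Z : Finset ℕ, M.IsCyclicFlat Z ↔
        (Z = c.E ∨ ∃ I : Finset (Fin c.m),
          ((I.biUnion c.F).card : ℤ) - ∑ i ∈ I, (c.η i : ℤ) < (c.k : ℤ) ∧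
          Z = I.biUnion c.F)) := by
  exact ⟨C1.M c, rfl, C1.main_rank_biUnion c, C1.main_rank_ground c, C1.main_cyclic_flats c⟩
end

section
/- Let M be a matroid on a finite ground set and let X and Y be cyclic flats of M. Let Z∧ denote the union of all circuits of M contained in X ∩ Y, and let Z∨ denote the closure of X ∪ Y. Then: (i) Z∨ is a cyclic flat of M; (ii) Z∧ is a cyclic flat of M; and (iii) r_M(X) + r_M(Y) ≥ r_M(Z∨) + r_M(Z∧) + |(X ∩ Y) ∖ Z∧|. -/
open scoped BigOperators

attribute [local instance] Classical.propDecidable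

/-- The union of all circuits of `M` contained in `X ∩ Y` (the meet of `X` and `Y`
in the lattice of cyclic flats). -/
noncomputable def FinMatroid.cfMeet {α : Type} [DecidableEq α] (M : FinMatroid α) (X Y : Finset α) :
    Finset α :=
  (X ∩ Y).filter (fun x => ∃ C, C ⊆ X ∩ Y ∧ M.IsCircuit C ∧ x ∈ C)

section Lemmas

namespace FinMatroid

variable {α : Type} [DecidableEq α] (M : FinMatroid α)

lemma rk_submodular' (X Y : Finset α) (hX : X ⊆ M.E) (hY : Y ⊆ M.E) :
    M.rk (X ∪ Y) + M.rk (X ∩ Y) ≤ M.rk X + M.rk Y := by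
  have h := M.rk_submodular X Y hX hY
  have e1 : (X ∪ Y : Finset α)
      = @Union.union _ (@Finset.instUnion _ (fun a b => Classical.propDecidable (a = b))) X Y := by
    ext a; simp [Finset.mem_union]
  have e2 : (X ∩ Y : Finset α)
      = @Inter.inter _ (@Finset.instInter _ (fun a b => Classical.propDecidable (a = b))) X Y := by
    ext a; simp [Finset.mem_inter]
  rw [e1, e2]
  exact h

lemma rk_empty : M.rk ∅ = 0 :=
  Nat.le_zero.mp (by simpa using M.rk_le_card ∅ (Finset.empty_subset _))

lemma rk_insert_le {X : Finset α} {y : α} (hX : X ⊆ M.E) (hy : y ∈ M.E) :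
    M.rk (insert y X) ≤ M.rk X + 1 := by
  have h := M.rk_submodular' X {y} hX (by simpa using hy)
  have h1 : M.rk {y} ≤ 1 := by simpa using M.rk_le_card {y} (by simpa using hy)
  have : insert y X = X ∪ {y} := by ext a; simp [or_comm]
  rw [← this] at h
  omega

lemma rk_le_insert {X : Finset α} {y : α} (hX : X ⊆ M.E) (hy : y ∈ M.E) :
    M.rk X ≤ M.rk (insert y X) :=
  M.rk_mono X (insert y X) (Finset.subset_insert _ _) (Finset.insert_subset hy hX)

/-- If every element of `S` adds nothing to the rank of `T ⊆ S`, then `rk S = rk T`. -/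
lemma rk_spanning : ∀ (n : ℕ) (T S : Finset α), (S \ T).card = n → T ⊆ S → S ⊆ M.E →
    (∀ s ∈ S, M.rk (insert s T) = M.rk T) → M.rk S = M.rk T := by
  intro n
  induction n with
  | zero =>
    intro T S hcard hTS _ _
    have : S \ T = ∅ := Finset.card_eq_zero.mp hcard
    have : S ⊆ T := fun x hx => by
      by_contra hxT
      exact absurd (Finset.mem_sdiff.mpr ⟨hx, hxT⟩) (by simp [this])
    rw [Finset.Subset.antisymm this hTS]
  | succ n ih =>
    intro T S hcard hTS hSE h
    have hne : (S \ T).Nonempty := Finset.card_pos.mp (by omega)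
    obtain ⟨s, hs⟩ := hne
    have hsS : s ∈ S := (Finset.mem_sdiff.mp hs).1
    have hsT : s ∉ T := (Finset.mem_sdiff.mp hs).2
    set T' := insert s T with hT'
    have hT'S : T' ⊆ S := Finset.insert_subset hsS hTS
    have hT'E : T' ⊆ M.E := hT'S.trans hSE
    have hTE : T ⊆ M.E := hTS.trans hSE
    have hrkT' : M.rk T' = M.rk T := h s hsS
    have hcard' : (S \ T').card = n := by
      have he : S \ T' = (S \ T).erase s := by
        ext a
        simp only [hT', Finset.mem_sdiff, Finset.mem_erase, Finset.mem_insert, not_or]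
        tauto
      rw [he, Finset.card_erase_of_mem hs, hcard]
      omega
    have key : ∀ s' ∈ S, M.rk (insert s' T') = M.rk T' := by
      intro s' hs'
      by_cases hs'T' : s' ∈ T'
      · rw [Finset.insert_eq_self.mpr hs'T']
      have hs'T : s' ∉ T := fun hc => hs'T' (Finset.mem_insert_of_mem hc)
      have hb := M.rk_submodular' (insert s T) (insert s' T)
        (Finset.insert_subset (hSE hsS) hTE) (Finset.insert_subset (hSE hs') hTE)
      have hu : insert s T ∪ insert s' T = insert s' T' := by
        ext a
        simp only [Finset.mem_union, Finset.mem_insert, hT']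
        tauto
      have hTi : T ⊆ insert s T ∩ insert s' T := by
        intro a ha; simp [Finset.mem_inter, ha]
      have hi : M.rk T ≤ M.rk (insert s T ∩ insert s' T) :=
        M.rk_mono _ _ hTi ((Finset.inter_subset_left).trans (Finset.insert_subset (hSE hsS) hTE))
      rw [hu] at hb
      have h1 : M.rk (insert s T) = M.rk T := h s hsS
      have h2 : M.rk (insert s' T) = M.rk T := h s' hs'
      have hge : M.rk T' ≤ M.rk (insert s' T') :=
        M.rk_le_insert hT'E (hSE hs')
      omega
    rw [← hrkT']
    exact ih T' S hcard' hT'S hSE key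

lemma closure_subset_ground (X : Finset α) : M.closure X ⊆ M.E :=
  Finset.filter_subset _ _

lemma mem_closure {X : Finset α} {y : α} :
    y ∈ M.closure X ↔ y ∈ M.E ∧ M.rk (insert y X) = M.rk X := by
  simp [closure]

lemma subset_closure {X : Finset α} (hX : X ⊆ M.E) : X ⊆ M.closure X := by
  intro x hx
  exact M.mem_closure.mpr ⟨hX hx, by rw [Finset.insert_eq_self.mpr hx]⟩

lemma rk_closure {X : Finset α} (hX : X ⊆ M.E) : M.rk (M.closure X) = M.rk X := by
  apply M.rk_spanning (M.closure X \ X).card X (M.closure X) rfl (M.subset_closure hX)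
    (M.closure_subset_ground X)
  intro s hs
  exact (M.mem_closure.mp hs).2

lemma closure_mono {X Y : Finset α} (hXY : X ⊆ Y) (hY : Y ⊆ M.E) :
    M.closure X ⊆ M.closure Y := by
  intro y hy
  obtain ⟨hyE, hrk⟩ := M.mem_closure.mp hy
  have hX : X ⊆ M.E := hXY.trans hY
  refine M.mem_closure.mpr ⟨hyE, ?_⟩
  have hb := M.rk_submodular' (insert y X) Y (Finset.insert_subset hyE hX) hY
  have hu : insert y X ∪ Y = insert y Y := by
    ext a
    have hx := @hXY a
    simp only [Finset.mem_union, Finset.mem_insert]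
    tauto
  have hXi : X ⊆ insert y X ∩ Y := fun a ha =>
    Finset.mem_inter.mpr ⟨Finset.mem_insert_of_mem ha, hXY ha⟩
  have hi : M.rk X ≤ M.rk (insert y X ∩ Y) :=
    M.rk_mono _ _ hXi (Finset.inter_subset_right.trans hY)
  rw [hu] at hb
  have hge : M.rk Y ≤ M.rk (insert y Y) := M.rk_le_insert hY hyE
  omega

lemma closure_idem {X : Finset α} (hX : X ⊆ M.E) :
    M.closure (M.closure X) = M.closure X := by
  apply Finset.Subset.antisymm
  · intro y hy
    obtain ⟨hyE, hrk⟩ := M.mem_closure.mp hy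
    refine M.mem_closure.mpr ⟨hyE, ?_⟩
    have h1 : M.rk (insert y X) ≤ M.rk (insert y (M.closure X)) :=
      M.rk_mono _ _ (Finset.insert_subset_insert _ (M.subset_closure hX))
        (Finset.insert_subset hyE (M.closure_subset_ground X))
    have h2 : M.rk X ≤ M.rk (insert y X) :=
      M.rk_le_insert hX hyE
    have h3 : M.rk (M.closure X) = M.rk X := M.rk_closure hX
    omega
  · exact M.subset_closure (M.closure_subset_ground X)

lemma closure_isFlat {X : Finset α} (hX : X ⊆ M.E) : M.IsFlat (M.closure X) :=
  ⟨M.closure_subset_ground X, M.closure_idem hX⟩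

lemma indep_subset {I X : Finset α} (hIE : I ⊆ M.E) (hI : M.rk I = I.card)
    (hXI : X ⊆ I) : M.rk X = X.card := by
  have hb := M.rk_submodular' X (I \ X) (hXI.trans hIE) ((Finset.sdiff_subset).trans hIE)
  have hu : X ∪ (I \ X) = I := Finset.union_sdiff_of_subset hXI
  have hi : X ∩ (I \ X) = ∅ := by ext a; simp
  rw [hu, hi, M.rk_empty] at hb
  have h1 : M.rk (I \ X) ≤ (I \ X).card := M.rk_le_card _ ((Finset.sdiff_subset).trans hIE)
  have h2 : (I \ X).card = I.card - X.card := Finset.card_sdiff_of_subset hXI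
  have h3 : X.card ≤ I.card := Finset.card_le_card hXI
  have h4 : M.rk X ≤ X.card := M.rk_le_card _ (hXI.trans hIE)
  omega

lemma exists_basis {S : Finset α} (hS : S ⊆ M.E) :
    ∃ I, I ⊆ S ∧ M.rk I = I.card ∧ M.rk I = M.rk S := by
  set s := S.powerset.filter (fun I => M.rk I = I.card) with hs
  have hne : s.Nonempty := ⟨∅, by simp [hs, M.rk_empty]⟩
  obtain ⟨I, hIs, hImax⟩ := Finset.exists_max_image s Finset.card hne
  have hIS : I ⊆ S := Finset.mem_powerset.mp (Finset.mem_filter.mp hIs).1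
  have hIind : M.rk I = I.card := (Finset.mem_filter.mp hIs).2
  have hIE : I ⊆ M.E := hIS.trans hS
  refine ⟨I, hIS, hIind, ?_⟩
  have key : ∀ x ∈ S, M.rk (insert x I) = M.rk I := by
    intro x hx
    by_cases hxI : x ∈ I
    · rw [Finset.insert_eq_self.mpr hxI]
    have hle : M.rk (insert x I) ≤ M.rk I + 1 := M.rk_insert_le hIE (hS hx)
    have hge : M.rk I ≤ M.rk (insert x I) := M.rk_le_insert hIE (hS hx)
    rcases Nat.lt_or_ge (M.rk (insert x I)) (M.rk I + 1) with h | h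
    · omega
    · exfalso
      have hce : (insert x I).card = I.card + 1 := Finset.card_insert_of_notMem hxI
      have : M.rk (insert x I) = (insert x I).card := by
        have := M.rk_le_card (insert x I) (Finset.insert_subset (hS hx) hIE)
        omega
      have hmem : insert x I ∈ s := by
        refine Finset.mem_filter.mpr ⟨Finset.mem_powerset.mpr (Finset.insert_subset hx hIS), this⟩
      have := hImax _ hmem
      omega
  exact (M.rk_spanning (S \ I).card I S rfl hIS hS key).symm

lemma exists_circuit_of_dep {S : Finset α} {z : α} (hS : S ⊆ M.E) (hz : z ∈ M.E)
    (hzS : z ∉ S) (h : M.rk (insert z S) = M.rk S) :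
    ∃ C, C ⊆ insert z S ∧ M.IsCircuit C ∧ z ∈ C := by
  obtain ⟨I, hIS, hIind, hIrk⟩ := M.exists_basis hS
  have hIE : I ⊆ M.E := hIS.trans hS
  have hzI : z ∉ I := fun hc => hzS (hIS hc)
  have hdep : M.rk (insert z I) < (insert z I).card := by
    have h1 : M.rk (insert z I) ≤ M.rk (insert z S) :=
      M.rk_mono _ _ (Finset.insert_subset_insert _ hIS) (Finset.insert_subset hz hS)
    have h2 : (insert z I).card = I.card + 1 := Finset.card_insert_of_notMem hzI
    omega
  -- pick a minimal dependent subset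
  set t := (insert z I).powerset.filter (fun C => M.rk C < C.card) with ht
  have htne : t.Nonempty := ⟨insert z I, by simp [ht, hdep]⟩
  obtain ⟨C, hCt, hCmin⟩ := Finset.exists_min_image t Finset.card htne
  have hCsub : C ⊆ insert z I := Finset.mem_powerset.mp (Finset.mem_filter.mp hCt).1
  have hCdep : M.rk C < C.card := (Finset.mem_filter.mp hCt).2
  have hCE : C ⊆ M.E := hCsub.trans (Finset.insert_subset hz hIE)
  have hzC : z ∈ C := by
    by_contra hzC
    have hCI : C ⊆ I := fun a ha => by
      rcases Finset.mem_insert.mp (hCsub ha) with rfl | h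
      · exact absurd ha hzC
      · exact h
    have := M.indep_subset hIE hIind hCI
    omega
  refine ⟨C, hCsub.trans (Finset.insert_subset_insert _ hIS), ⟨hCE, hCdep, ?_⟩, hzC⟩
  intro W hW
  have hWC : W ⊆ C := hW.1
  have hWE : W ⊆ M.E := hWC.trans hCE
  have hle : M.rk W ≤ W.card := M.rk_le_card _ hWE
  by_contra hne
  have hWdep : M.rk W < W.card := lt_of_le_of_ne hle hne
  have hWt : W ∈ t := Finset.mem_filter.mpr
    ⟨Finset.mem_powerset.mpr (hWC.trans hCsub), hWdep⟩
  have hlt : W.card < C.card := Finset.card_lt_card hW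
  have := hCmin _ hWt
  omega

end FinMatroid

end Lemmas

section MeetLemmas

namespace FinMatroid

variable {α : Type} [DecidableEq α] (M : FinMatroid α)

lemma cfMeet_subset (X Y : Finset α) : M.cfMeet X Y ⊆ X ∩ Y :=
  Finset.filter_subset _ _

lemma mem_cfMeet {X Y : Finset α} {x : α} :
    x ∈ M.cfMeet X Y ↔ x ∈ X ∩ Y ∧ ∃ C, C ⊆ X ∩ Y ∧ M.IsCircuit C ∧ x ∈ C := by
  simp [cfMeet]

lemma meet_aux {X Y : Finset α} (hXE : X ⊆ M.E) :
    ∀ (n : ℕ) (S : Finset α), (S \ M.cfMeet X Y).card = n → M.cfMeet X Y ⊆ S → S ⊆ X ∩ Y →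
      M.rk (M.cfMeet X Y) + (S \ M.cfMeet X Y).card ≤ M.rk S := by
  intro n
  induction n with
  | zero =>
    intro S hcard hDS hSXY
    have h0 : S \ M.cfMeet X Y = ∅ := Finset.card_eq_zero.mp hcard
    have hSD : S ⊆ M.cfMeet X Y := fun x hx => by
      by_contra hxD
      exact absurd (Finset.mem_sdiff.mpr ⟨hx, hxD⟩) (by simp [h0])
    rw [hcard, Finset.Subset.antisymm hSD hDS]
    simp
  | succ n ih =>
    intro S hcard hDS hSXY
    have hSE : S ⊆ M.E := hSXY.trans ((Finset.inter_subset_left).trans hXE)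
    have hne : (S \ M.cfMeet X Y).Nonempty := Finset.card_pos.mp (by omega)
    obtain ⟨w, hw⟩ := hne
    have hwS : w ∈ S := (Finset.mem_sdiff.mp hw).1
    have hwD : w ∉ M.cfMeet X Y := (Finset.mem_sdiff.mp hw).2
    set T := S.erase w with hT
    have hTS : T ⊆ S := Finset.erase_subset _ _
    have hTE : T ⊆ M.E := hTS.trans hSE
    have hwT : w ∉ T := Finset.notMem_erase _ _
    have hins : insert w T = S := Finset.insert_erase hwS
    have hDT : M.cfMeet X Y ⊆ T := fun x hx =>
      Finset.mem_erase.mpr ⟨fun hc => hwD (hc ▸ hx), hDS hx⟩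
    have hcardT : (T \ M.cfMeet X Y).card = n := by
      have : T \ M.cfMeet X Y = (S \ M.cfMeet X Y).erase w := by
        ext a
        simp [hT, Finset.mem_sdiff, Finset.mem_erase]
        tauto
      rw [this, Finset.card_erase_of_mem hw, hcard]
      omega
    have hstep : M.rk S = M.rk T + 1 := by
      have hle : M.rk S ≤ M.rk T + 1 := by
        rw [← hins]; exact M.rk_insert_le hTE (hSE hwS)
      have hge : M.rk T ≤ M.rk S := M.rk_mono _ _ hTS hSE
      rcases Nat.lt_or_ge (M.rk S) (M.rk T + 1) with h | h
      · exfalso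
        have heq : M.rk (insert w T) = M.rk T := by rw [hins]; omega
        obtain ⟨C, hCsub, hCcirc, hwC⟩ :=
          M.exists_circuit_of_dep hTE (hSE hwS) hwT heq
        have hCXY : C ⊆ X ∩ Y :=
          hCsub.trans (Finset.insert_subset (hSXY hwS) (hTS.trans hSXY))
        exact hwD (M.mem_cfMeet.mpr ⟨hSXY hwS, C, hCXY, hCcirc, hwC⟩)
      · omega
    have := ih T hcardT hDT (hTS.trans hSXY)
    omega

end FinMatroid

end MeetLemmas

/-- Axioms (Z0) and (Z3) of the lattice of cyclic flats: for cyclic flats `X`, `Y`,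
the join `cl(X ∪ Y)` and the meet (the union of all circuits inside `X ∩ Y`) are
cyclic flats, and `rk X + rk Y ≥ rk(X ∨ Y) + rk(X ∧ Y) + |(X ∩ Y) \ (X ∧ Y)|`. -/
theorem cyclicFlat_join_meet
    {α : Type} [DecidableEq α] (M : FinMatroid α) (X Y : Finset α)
    (hX : M.IsCyclicFlat X) (hY : M.IsCyclicFlat Y) :
    M.IsCyclicFlat (M.closure (X ∪ Y)) ∧
    M.IsCyclicFlat (M.cfMeet X Y) ∧
    M.rk (M.closure (X ∪ Y)) + M.rk (M.cfMeet X Y) + ((X ∩ Y) \ M.cfMeet X Y).card ≤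
      M.rk X + M.rk Y := by
  obtain ⟨⟨hXflat, hXcyc⟩, hXE⟩ : (M.IsFlat X ∧ M.IsCyclic X) ∧ X ⊆ M.E := ⟨hX, hX.1.1⟩
  obtain ⟨⟨hYflat, hYcyc⟩, hYE⟩ : (M.IsFlat Y ∧ M.IsCyclic Y) ∧ Y ⊆ M.E := ⟨hY, hY.1.1⟩
  have hXYE : X ∪ Y ⊆ M.E := Finset.union_subset hXE hYE
  have hXiYE : X ∩ Y ⊆ M.E := (Finset.inter_subset_left).trans hXE
  -- (i) join is a cyclic flat
  have hjoin : M.IsCyclicFlat (M.closure (X ∪ Y)) := by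
    refine ⟨M.closure_isFlat hXYE, M.closure_subset_ground _, ?_⟩
    intro z hz
    by_cases hzXY : z ∈ X ∪ Y
    · rcases Finset.mem_union.mp hzXY with hzX | hzY
      · obtain ⟨C, hCX, hCcirc, hzC⟩ := hXcyc.2 z hzX
        exact ⟨C, (hCX.trans Finset.subset_union_left).trans
          (M.subset_closure hXYE), hCcirc, hzC⟩
      · obtain ⟨C, hCY, hCcirc, hzC⟩ := hYcyc.2 z hzY
        exact ⟨C, (hCY.trans Finset.subset_union_right).trans
          (M.subset_closure hXYE), hCcirc, hzC⟩
    · obtain ⟨hzE, hrk⟩ := M.mem_closure.mp hz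
      obtain ⟨C, hCsub, hCcirc, hzC⟩ := M.exists_circuit_of_dep hXYE hzE hzXY hrk
      exact ⟨C, hCsub.trans (Finset.insert_subset hz (M.subset_closure hXYE)),
        hCcirc, hzC⟩
  -- (ii) meet is a cyclic flat
  have hDsub : M.cfMeet X Y ⊆ X ∩ Y := M.cfMeet_subset X Y
  have hDE : M.cfMeet X Y ⊆ M.E := hDsub.trans hXiYE
  have hmeet : M.IsCyclicFlat (M.cfMeet X Y) := by
    constructor
    · refine ⟨hDE, ?_⟩
      apply Finset.Subset.antisymm
      · intro z hz
        have hzX : z ∈ X := by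
          have h1 : M.closure (M.cfMeet X Y) ⊆ M.closure X :=
            M.closure_mono (hDsub.trans Finset.inter_subset_left) hXE
          rw [hXflat.2] at h1
          exact h1 hz
        have hzY : z ∈ Y := by
          have h1 : M.closure (M.cfMeet X Y) ⊆ M.closure Y :=
            M.closure_mono (hDsub.trans Finset.inter_subset_right) hYE
          rw [hYflat.2] at h1
          exact h1 hz
        by_cases hzD : z ∈ M.cfMeet X Y
        · exact hzD
        · obtain ⟨hzE, hrk⟩ := M.mem_closure.mp hz
          obtain ⟨C, hCsub, hCcirc, hzC⟩ := M.exists_circuit_of_dep hDE hzE hzD hrk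
          have hCXY : C ⊆ X ∩ Y := hCsub.trans
            (Finset.insert_subset (Finset.mem_inter.mpr ⟨hzX, hzY⟩) hDsub)
          exact M.mem_cfMeet.mpr ⟨Finset.mem_inter.mpr ⟨hzX, hzY⟩, C, hCXY, hCcirc, hzC⟩
      · exact M.subset_closure hDE
    · refine ⟨hDE, ?_⟩
      intro x hx
      obtain ⟨hxXY, C, hCXY, hCcirc, hxC⟩ := M.mem_cfMeet.mp hx
      refine ⟨C, ?_, hCcirc, hxC⟩
      intro c hc
      exact M.mem_cfMeet.mpr ⟨hCXY hc, C, hCXY, hCcirc, hc⟩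
  refine ⟨hjoin, hmeet, ?_⟩
  -- (iii) rank inequality
  have h1 : M.rk (M.closure (X ∪ Y)) = M.rk (X ∪ Y) := M.rk_closure hXYE
  have h2 : M.rk (X ∪ Y) + M.rk (X ∩ Y) ≤ M.rk X + M.rk Y :=
    M.rk_submodular' X Y hXE hYE
  have h3 : M.rk (M.cfMeet X Y) + ((X ∩ Y) \ M.cfMeet X Y).card ≤ M.rk (X ∩ Y) :=
    M.meet_aux hXE _ (X ∩ Y) rfl hDsub (Finset.Subset.refl _)
  omega
end
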